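/- Let (X_n, Y_n) be the arithmetic coding interval endpoints under i.i.d. Bernoulli(p) bits. For every m ≥ 1, E[X_n^m] → 1/(m+1) as n → ∞. Consequently X_n converges in distribution to the uniform distribution on [0,1]. -/

import Mathlib

open MeasureTheory ProbabilityTheory Filter

namespace CodewordAux

variable (p q : ℝ)

/-- Left endpoint of the coding interval given the list of bits. -/
def F : List Bool → ℝ
  | [] => 0
  | b :: l => if b then q + p * F l else q * F l

/-- Length of the coding interval given the list of bits. -/
def G : List Bool → ℝ
  | [] => 1
  | b :: l => (if b then p else q) * G l

lemma F_append (l : List Bool) (b : Bool) :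
    F p q (l ++ [b]) = F p q l + (if b then q * G p q l else 0) := by
  induction l with
  | nil => cases b <;> simp [F, G]
  | cons a l ih =>
      cases a <;> cases b <;> simp [F, G, ih] at * <;> ring

lemma G_append (l : List Bool) (b : Bool) :
    G p q (l ++ [b]) = G p q l * (if b then p else q) := by
  induction l with
  | nil => simp [G]
  | cons a l ih => cases a <;> simp [G, ih] <;> ring

variable {p q} (hp : 0 < p) (hq : 0 < q) (hpq : p + q = 1)

include hp hq in
lemma G_pos (l : List Bool) : 0 < G p q l := by
  induction l with
  | nil => norm_num [G]
  | cons a l ih => cases a <;> simpa [G] using by positivity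

include hp hq in
lemma F_nonneg (l : List Bool) : 0 ≤ F p q l := by
  induction l with
  | nil => norm_num [F]
  | cons a l ih => cases a <;> simp [F] <;> positivity

include hp hq hpq in
lemma F_add_G_le_one (l : List Bool) : F p q l + G p q l ≤ 1 := by
  induction l with
  | nil => norm_num [F, G]
  | cons a l ih =>
      cases a <;> simp [F, G] <;> nlinarith [G_pos hp hq l, F_nonneg hp hq l]

include hp hq in
lemma G_le (l : List Bool) : G p q l ≤ (max p q) ^ l.length := by
  induction l with
  | nil => norm_num [G]
  | cons a l ih =>
      have h1 : (0:ℝ) ≤ max p q := le_max_of_le_left hp.le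
      have h1 : (0:ℝ) < max p q := lt_max_of_lt_left hp
      have hG := G_pos hp hq l
      cases a <;> simp [G, pow_succ] <;> nlinarith [le_max_left p q, le_max_right p q]


lemma G_ofFn {n : ℕ} (v : Fin n → Bool) :
    G p q (List.ofFn v) = ∏ i, (if v i then p else q) := by
  induction n with
  | zero => simp [G]
  | succ n ih =>
      rw [List.ofFn_succ, Fin.prod_univ_succ]
      simp only [G, ih]

lemma ofFn_snoc {n : ℕ} (v : Fin n → Bool) (b : Bool) :
    List.ofFn (Fin.snoc v b : Fin (n+1) → Bool) = List.ofFn v ++ [b] := by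
  rw [List.ofFn_succ']
  simp [Fin.snoc_castSucc, Fin.snoc_last, List.concat_eq_append]

lemma sum_snoc {n : ℕ} (T : (Fin (n+1) → Bool) → ℝ) :
    ∑ w : Fin (n+1) → Bool, T w
      = ∑ v : Fin n → Bool, (T (Fin.snoc v false) + T (Fin.snoc v true)) := by
  rw [← Fintype.sum_equiv (Fin.snocEquiv (fun _ : Fin (n+1) => Bool))
      (fun (x : Bool × (Fin n → Bool)) => T (Fin.snoc x.2 x.1)) T (fun x => rfl)]
  rw [Fintype.sum_prod_type_right]
  simp only [Fin.snocEquiv]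
  exact Finset.sum_congr rfl fun v _ => by rw [Fintype.sum_bool, add_comm]

include hp hq hpq in
lemma integral_decomp {n : ℕ} {h : ℝ → ℝ} (hc : Continuous h) :
    ∫ x in (0:ℝ)..1, h x
      = ∑ v : Fin n → Bool,
          ∫ x in (F p q (List.ofFn v))..(F p q (List.ofFn v) + G p q (List.ofFn v)), h x := by
  induction n with
  | zero => simp [F, G]
  | succ n ih =>
      rw [ih, sum_snoc]
      refine Finset.sum_congr rfl fun v _ => ?_
      rw [ofFn_snoc, ofFn_snoc, F_append, F_append, G_append, G_append]
      simp only [if_true, if_false, Bool.false_eq_true, add_zero]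
      rw [← intervalIntegral.integral_add_adjacent_intervals
        (a := F p q (List.ofFn v)) (b := F p q (List.ofFn v) + q * G p q (List.ofFn v))
        (c := F p q (List.ofFn v) + G p q (List.ofFn v))
        (hc.intervalIntegrable _ _) (hc.intervalIntegrable _ _)]
      congr 2 <;> ring_nf <;> nlinarith [G_pos hp hq (List.ofFn v)]


include hpq in
lemma sum_G (n : ℕ) : ∑ v : Fin n → Bool, G p q (List.ofFn v) = 1 := by
  induction n with
  | zero => simp [G]
  | succ n ih =>
      rw [sum_snoc (fun w => G p q (List.ofFn w))]
      have : ∀ v : Fin n → Bool,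
          G p q (List.ofFn (Fin.snoc v false : Fin (n+1) → Bool))
            + G p q (List.ofFn (Fin.snoc v true : Fin (n+1) → Bool))
          = G p q (List.ofFn v) := by
        intro v
        rw [ofFn_snoc, ofFn_snoc, G_append, G_append]
        simp only [if_true, if_false, Bool.false_eq_true]
        linear_combination (G p q (List.ofFn v)) * hpq
      simp only [this, ih]

include hp hq hpq in
lemma tendsto_core {h : ℝ → ℝ} (hc : Continuous h) :
    Tendsto (fun n => ∑ v : Fin n → Bool, G p q (List.ofFn v) * h (F p q (List.ofFn v)))
      atTop (nhds (∫ x in (0:ℝ)..1, h x)) := by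
  have hp1 : p < 1 := by nlinarith
  have hq1 : q < 1 := by nlinarith
  set r : ℝ := max p q with hr
  have hr0 : 0 ≤ r := le_max_of_le_left hp.le
  have hr1 : r < 1 := max_lt hp1 hq1
  rw [Metric.tendsto_atTop]
  intro ε hε
  have hucont : UniformContinuousOn h (Set.Icc (0:ℝ) 1) :=
    isCompact_Icc.uniformContinuousOn_of_continuous hc.continuousOn
  rw [Metric.uniformContinuousOn_iff] at hucont
  obtain ⟨δ, hδ, Hδ⟩ := hucont (ε/2) (by positivity)
  obtain ⟨N, hN⟩ := ((tendsto_pow_atTop_nhds_zero_of_lt_one hr0 hr1).eventually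
    (gt_mem_nhds hδ)).exists_forall_of_atTop
  refine ⟨N, fun n hn => ?_⟩
  have hrn : r ^ n < δ := lt_of_le_of_lt (pow_le_pow_of_le_one hr0 hr1.le hn) (hN N le_rfl)
  rw [integral_decomp hp hq hpq hc (n := n), dist_eq_norm, ← Finset.sum_sub_distrib]
  have key : ∀ v : Fin n → Bool,
      ‖G p q (List.ofFn v) * h (F p q (List.ofFn v))
        - ∫ x in (F p q (List.ofFn v))..(F p q (List.ofFn v) + G p q (List.ofFn v)), h x‖
      ≤ (ε/2) * G p q (List.ofFn v) := by
    intro v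
    set a := F p q (List.ofFn v)
    set L := G p q (List.ofFn v)
    have hL : 0 < L := G_pos hp hq _
    have ha0 : 0 ≤ a := F_nonneg hp hq _
    have ha1 : a + L ≤ 1 := F_add_G_le_one hp hq hpq _
    have hconst : L * h a = ∫ _x in a..(a + L), h a := by
      rw [intervalIntegral.integral_const, smul_eq_mul]
      ring
    rw [hconst, ← intervalIntegral.integral_sub (intervalIntegrable_const)
      (hc.intervalIntegrable _ _)]
    have hbound : ∀ x ∈ Set.uIoc a (a + L), ‖h a - h x‖ ≤ ε/2 := by
      intro x hx
      rw [Set.uIoc_of_le (by linarith)] at hx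
      have hx1 : x ∈ Set.Icc (0:ℝ) 1 := ⟨by linarith [hx.1], by linarith [hx.2]⟩
      have ha' : a ∈ Set.Icc (0:ℝ) 1 := ⟨ha0, by linarith⟩
      have hdist : dist a x < δ := by
        rw [Real.dist_eq, abs_lt]
        have hLr : L ≤ r ^ n := by
          simpa [List.length_ofFn] using G_le hp hq (List.ofFn v)
        constructor <;> [linarith [hx.2]; linarith [hx.1]]
      have := Hδ a ha' x hx1 hdist
      rw [dist_eq_norm] at this
      exact this.le
    calc ‖∫ x in a..(a + L), (h a - h x)‖ ≤ (ε/2) * |a + L - a| :=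
          intervalIntegral.norm_integral_le_of_norm_le_const hbound
      _ = (ε/2) * L := by rw [show a + L - a = L by ring, abs_of_pos hL]
  calc ‖∑ v : Fin n → Bool, (G p q (List.ofFn v) * h (F p q (List.ofFn v))
          - ∫ x in (F p q (List.ofFn v))..(F p q (List.ofFn v) + G p q (List.ofFn v)), h x)‖
      ≤ ∑ v : Fin n → Bool, (ε/2) * G p q (List.ofFn v) :=
        (norm_sum_le _ _).trans (Finset.sum_le_sum fun v _ => key v)
    _ = ε/2 := by rw [← Finset.mul_sum, sum_G hpq n, mul_one]
    _ < ε := by linarith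

end CodewordAux

open CodewordAux in
/-- For every `m ≥ 1`, `E[X_nᵐ] → 1/(m+1)`; consequently `X_n` converges in
distribution to the uniform distribution on `[0,1]` (tested against bounded
continuous functions). -/
theorem codeword_uniform_limit
    (p : ℝ) (hp : p ∈ Set.Ioo (0:ℝ) 1) (q : ℝ) (hq : q = 1 - p)
    {Ω : Type*} [MeasurableSpace Ω] (μ : Measure Ω) [IsProbabilityMeasure μ]
    (B : ℕ → Ω → Bool) (hBmeas : ∀ n, Measurable (B n))
    (hBindep : iIndepFun B μ)
    (hBdist : ∀ n, μ {ω | B n ω = true} = ENNReal.ofReal p)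
    (X Y : ℕ → Ω → ℝ)
    (hX0 : ∀ ω, X 0 ω = 0) (hY0 : ∀ ω, Y 0 ω = 1)
    (hstep : ∀ n ω, (X (n + 1) ω, Y (n + 1) ω) =
      if B n ω then (X n ω + q * (Y n ω - X n ω), Y n ω)
      else (X n ω, X n ω + q * (Y n ω - X n ω))) :
    (∀ m : ℕ, 1 ≤ m →
      Tendsto (fun n => ∫ ω, (X n ω) ^ m ∂μ) atTop (nhds (1 / (m + 1 : ℝ)))) ∧
    (∀ f : BoundedContinuousFunction ℝ ℝ,
      Tendsto (fun n => ∫ ω, f (X n ω) ∂μ) atTop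
        (nhds (∫ x in Set.Icc (0:ℝ) 1, f x))) := by
  obtain ⟨hp0, hp1⟩ := hp
  have hq0 : 0 < q := by linarith
  have hpq : p + q = 1 := by linarith
  -- pointwise representation
  have hrep : ∀ n ω, X n ω = F p q (List.ofFn (fun i : Fin n => B (↑i) ω)) ∧
      Y n ω = F p q (List.ofFn (fun i : Fin n => B (↑i) ω))
            + G p q (List.ofFn (fun i : Fin n => B (↑i) ω)) := by
    intro n
    induction n with
    | zero => intro ω; simp [hX0, hY0, F, G]
    | succ n ih =>
        intro ω
        obtain ⟨hXn, hYn⟩ := ih ω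
        have hofn : List.ofFn (fun i : Fin (n+1) => B (↑i) ω)
            = List.ofFn (fun i : Fin n => B (↑i) ω) ++ [B n ω] := by
          rw [List.ofFn_succ']
          simp [List.concat_eq_append, Fin.coe_castSucc, Fin.val_last]
        have hs := hstep n ω
        rw [hofn, F_append, G_append]
        cases hB : B n ω
        · rw [hB] at hs
          simp only [Bool.false_eq_true, if_false] at hs ⊢
          simp only [Prod.mk.injEq] at hs
          obtain ⟨e1, e2⟩ := hs
          constructor
          · rw [e1, hXn]; ring
          · rw [e2, hXn, hYn]; ring
        · rw [hB] at hs
          simp only [if_true] at hs ⊢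
          simp only [Prod.mk.injEq] at hs
          obtain ⟨e1, e2⟩ := hs
          constructor
          · rw [e1, hXn, hYn]; ring
          · rw [e2, hYn]
            linear_combination (-(G p q (List.ofFn fun i : Fin n => B (↑i) ω))) * hpq
  -- expectation formula
  have hexp : ∀ (h : ℝ → ℝ) (n : ℕ), ∫ ω, h (X n ω) ∂μ
      = ∑ v : Fin n → Bool, G p q (List.ofFn v) * h (F p q (List.ofFn v)) := by
    intro h n
    set e : Ω → (Fin n → Bool) := fun ω i => B (↑i) ω with he_def
    have he : Measurable e := measurable_pi_lambda _ fun i => hBmeas _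
    set H : (Fin n → Bool) → ℝ := fun v => h (F p q (List.ofFn v)) with hH_def
    have h1 : ∀ ω, h (X n ω) = H (e ω) := fun ω => by rw [(hrep n ω).1]
    calc ∫ ω, h (X n ω) ∂μ = ∫ ω, H (e ω) ∂μ := by simp only [h1]
      _ = ∫ v, H v ∂(μ.map e) :=
          (integral_map he.aemeasurable (measurable_of_countable H).aestronglyMeasurable).symm
      _ = ∑ v : Fin n → Bool, ((μ.map e) {v}).toReal • H v := by
          haveI : IsProbabilityMeasure (μ.map e) := Measure.isProbabilityMeasure_map he.aemeasurable
          exact integral_fintype (.of_finite)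
      _ = ∑ v : Fin n → Bool, G p q (List.ofFn v) * h (F p q (List.ofFn v)) := by
          refine Finset.sum_congr rfl fun v _ => ?_
          have hmap : (μ.map e) {v} = μ (e ⁻¹' {v}) :=
            Measure.map_apply he (measurableSet_singleton v)
          -- compute the measure of the fiber via independence
          set sets : ℕ → Set Bool := fun i =>
            if hi : i < n then {v ⟨i, hi⟩} else Set.univ with hsets_def
          have hfiber : e ⁻¹' {v} = ⋂ i ∈ Finset.range n, B i ⁻¹' sets i := by
            ext ω
            simp only [Set.mem_preimage, Set.mem_singleton_iff, funext_iff, Set.mem_iInter,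
              Finset.mem_range, hsets_def, he_def]
            constructor
            · intro hv i hi
              rw [dif_pos hi]
              exact hv ⟨i, hi⟩
            · intro hv i
              have := hv i i.isLt
              rwa [dif_pos i.isLt, Set.mem_singleton_iff] at this
          have hindep := hBindep.measure_inter_preimage_eq_mul (Finset.range n)
            (sets := sets) (fun i _ => trivial)
          have hfac : ∀ i : Fin n, μ (B (↑i) ⁻¹' sets ↑i)
              = ENNReal.ofReal (if v i then p else q) := by
            intro i
            have hseti : sets ↑i = {v i} := by
              rw [hsets_def]; simp only [dif_pos i.isLt, Fin.eta]
            rw [hseti]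
            have htrue : B (↑i) ⁻¹' {true} = {ω | B (↑i) ω = true} := by
              ext ω; simp
            have hms : MeasurableSet (B (↑i : ℕ) ⁻¹' {true}) :=
              hBmeas _ (by trivial)
            rw [htrue] at hms
            cases hv : v i
            · have hfalse : B (↑i) ⁻¹' {false} = {ω | B (↑i) ω = true}ᶜ := by
                ext ω; simp
              rw [if_neg (by simp), hfalse, prob_compl_eq_one_sub hms, hBdist]
              rw [← ENNReal.ofReal_one, ← ENNReal.ofReal_sub _ hp0.le, hq]
            · rw [if_pos rfl, htrue, hBdist]
          have hprod : μ (e ⁻¹' {v})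
              = ENNReal.ofReal (∏ i : Fin n, (if v i then p else q)) := by
            rw [hfiber, hindep]
            rw [← Fin.prod_univ_eq_prod_range (fun i => μ (B i ⁻¹' sets i)) n]
            rw [ENNReal.ofReal_prod_of_nonneg (fun i _ => by positivity)]
            exact Finset.prod_congr rfl fun i _ => hfac i
          rw [hmap, hprod, ENNReal.toReal_ofReal (Finset.prod_nonneg fun i _ => by positivity),
            smul_eq_mul, hH_def, ← G_ofFn]
  constructor
  · intro m hm
    have hcore := tendsto_core hp0 hq0 hpq (continuous_pow m)
    have hval : ∫ x in (0:ℝ)..1, x ^ m = 1 / (m + 1 : ℝ) := by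
      rw [integral_pow]
      rw [zero_pow (Nat.succ_ne_zero m)]
      norm_num
    rw [hval] at hcore
    have : (fun n => ∫ ω, (X n ω) ^ m ∂μ)
        = fun n => ∑ v : Fin n → Bool, G p q (List.ofFn v) * (F p q (List.ofFn v)) ^ m := by
      funext n; exact hexp (fun x => x ^ m) n
    rw [this]
    exact hcore
  · intro f
    have hcore := tendsto_core hp0 hq0 hpq f.continuous
    have hval : ∫ x in Set.Icc (0:ℝ) 1, f x = ∫ x in (0:ℝ)..1, f x := by
      rw [intervalIntegral.integral_of_le zero_le_one, integral_Icc_eq_integral_Ioc]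
    rw [hval]
    have : (fun n => ∫ ω, f (X n ω) ∂μ)
        = fun n => ∑ v : Fin n → Bool, G p q (List.ofFn v) * f (F p q (List.ofFn v)) := by
      funext n; exact hexp f n
    rw [this]
    exact hcore
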